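/- arXiv:1312.6564 — 4 statements merged into one kernel-verified Lean document; each statement's English description precedes it below -/
import Mathlib

section
/- Let h ≥ 1 and x : Fin (2^h) → ZMod 2. Then x satisfies the equations ∑_{i} x i = 1 (in ZMod 2) together with the parity-restricted quadratic equations x i * x j = 0 for all pairs i ≠ j with i.val % 2 = j.val % 2, if and only if there exists exactly one index i : Fin (2^h) with x i = 1. (The parity-restricted equations force at most one coordinate equal to 1 among the even-indexed positions and at most one among the odd-indexed positions, and the linear equation then forces exactly one coordinate equal to 1 overall.) -/
/-- With the linear block-sum equation, the parity-restricted
quadratic equations already force exactly one coordinate equal to 1. -/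
theorem sum_one_and_parity_products_zero_iff_exists_unique
    (h : ℕ) (hh : 1 ≤ h) (x : Fin (2 ^ h) → ZMod 2) :
    ((∑ i : Fin (2 ^ h), x i = 1) ∧
      (∀ i j : Fin (2 ^ h), i ≠ j → i.val % 2 = j.val % 2 → x i * x j = 0)) ↔
    (∃! i : Fin (2 ^ h), x i = 1) := by
  have hval : ∀ a : ZMod 2, a = 0 ∨ a = 1 := by decide
  constructor
  · rintro ⟨hsum, hq⟩
    have hex : ∃ i, x i = 1 := by
      by_contra hne
      push_neg at hne
      have hz : ∀ i, x i = 0 := fun i => (hval (x i)).resolve_right (hne i)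
      simp [hz] at hsum
    obtain ⟨i, hi⟩ := hex
    refine ⟨i, hi, ?_⟩
    intro j hj
    by_contra hij
    have hpar : j.val % 2 ≠ i.val % 2 := by
      intro hp
      have := hq j i hij hp
      rw [hi, hj] at this
      simp at this
    have hzero : ∀ k, k ≠ i → k ≠ j → x k = 0 := by
      intro k hki hkj
      rcases eq_or_ne (k.val % 2) (i.val % 2) with hk | hk
      · have := hq k i hki hk
        rw [hi] at this
        simpa using this
      · have hk' : k.val % 2 = j.val % 2 := by omega
        have := hq k j hkj hk'
        rw [hj] at this
        simpa using this
    have hji : j ≠ i := hij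
    have hs : ∑ k, x k = x j + x i := by
      apply Fintype.sum_eq_add j i hji
      intro k hk
      simp at hk
      exact hzero k hk.2 hk.1
    rw [hsum, hi, hj] at hs
    simp at hs
  · rintro ⟨i, hi, huniq⟩
    have hz : ∀ j, j ≠ i → x j = 0 := by
      intro j hj
      rcases hval (x j) with h0 | h1
      · exact h0
      · exact absurd (huniq j h1) hj
    constructor
    · rw [Fintype.sum_eq_single i hz, hi]
    · intro k l hkl _
      rcases hval (x k) with h0 | h1
      · rw [h0, zero_mul]
      · have hk : k = i := huniq k h1
        have : l ≠ i := fun e => hkl (hk.trans e.symm)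
        rw [hz l this, mul_zero]
end

section
/- Let h ≥ 1 and x : Fin (2^h) → ZMod 2 with ∑_{i} x i = 1 in ZMod 2. Then x satisfies x i * x j = 0 for all pairs i ≠ j if and only if x satisfies x i * x j = 0 for all pairs i ≠ j with i.val % 2 = j.val % 2. That is, in the presence of the linear block-sum equation, the full set of quadratic equations over all pairs may be replaced by the smaller set of quadratic equations restricted to pairs of indices of equal parity, without changing the solution set. -/
/-- In the presence of the linear block-sum equation, the full
set of quadratic equations is equivalent to the parity-restricted set. -/
theorem full_quadratics_iff_parity_quadratics
    (h : ℕ) (hh : 1 ≤ h) (x : Fin (2 ^ h) → ZMod 2)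
    (hsum : ∑ i : Fin (2 ^ h), x i = 1) :
    (∀ i j : Fin (2 ^ h), i ≠ j → x i * x j = 0) ↔
    (∀ i j : Fin (2 ^ h), i ≠ j → i.val % 2 = j.val % 2 → x i * x j = 0) := by
  constructor
  · intro H i j hij _
    exact H i j hij
  · intro H i j hij
    by_contra hc
    have hx : ∀ a : ZMod 2, a = 0 ∨ a = 1 := by decide
    have hxi : x i = 1 := by
      rcases hx (x i) with h0 | h1
      · simp [h0] at hc
      · exact h1
    have hxj : x j = 1 := by
      rcases hx (x j) with h0 | h1
      · simp [h0] at hc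
      · exact h1
    have hpar : i.val % 2 ≠ j.val % 2 := fun hp => hc (H i j hij hp)
    have hk : ∀ k : Fin (2 ^ h), k ≠ i → k ≠ j → x k = 0 := by
      intro k hki hkj
      rcases hx (x k) with h0 | h1
      · exact h0
      have hp : k.val % 2 = i.val % 2 ∨ k.val % 2 = j.val % 2 := by omega
      rcases hp with hp | hp
      · have := H k i hki hp
        rw [h1, hxi] at this
        simpa using this
      · have := H k j hkj hp
        rw [h1, hxj] at this
        simpa using this
    have hsum2 : ∑ k : Fin (2 ^ h), x k = x i + x j := by
      rw [← Finset.sum_subset (Finset.subset_univ ({i, j} : Finset (Fin (2 ^ h))))]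
      · rw [Finset.sum_pair hij]
      · intro k _ hk'
        simp only [Finset.mem_insert, Finset.mem_singleton, not_or] at hk'
        exact hk k hk'.1 hk'.2
    rw [hsum2, hxi, hxj] at hsum
    exact absurd hsum (by decide)
end

section
/- Let k ≥ 1, s ≥ 1 and n = 2·k·s, and set m = s·(2s − 1) (equivalently, m = n·(n − k)/(2·k²)). Let f : (Fin n → ZMod 2) → ZMod 2 be any quadratic polynomial function of the form f(x) = ∑_{i < j} a i j * x i * x j + ∑_{i} b i * x i, with coefficients a : Fin n → Fin n → ZMod 2 and b : Fin n → ZMod 2. Then there exist m subsets S₁, …, S_m of Fin n, each of cardinality at most 2·k, and m functions g₁, …, g_m : (Fin n → ZMod 2) → ZMod 2, such that f = ∑_{t=1}^{m} g_t and each g_t depends only on the coordinates in S_t (i.e. for all u, v : Fin n → ZMod 2, if u i = v i for all i ∈ S_t, then g_t u = g_t v). -/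
open Finset

private lemma aux_card_pairs (N : ℕ) :
    (Finset.univ.filter fun p : Fin N × Fin N => p.1 < p.2).card * 2 = N * (N - 1) := by
  have h : (Finset.univ.filter fun p : Fin N × Fin N => p.1 < p.2).card
      = ∑ j : Fin N, (j : ℕ) := by
    rw [Finset.card_filter, ← Finset.univ_product_univ, Finset.sum_product_right]
    refine Finset.sum_congr rfl fun j _ => ?_
    rw [← Finset.card_filter]
    rw [show (Finset.filter (fun i => i < j) Finset.univ) = Finset.Iio j by ext i; simp]
    simp
  rw [h, Fin.sum_univ_eq_sum_range (fun i => i), Finset.sum_range_id_mul_two]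

private lemma aux_pairUp (N : ℕ) (hN : 2 ≤ N) :
    ∃ P : Fin N → {pq : Fin N × Fin N // pq.1 < pq.2},
      ∀ p, (P p).1.1 = p ∨ (P p).1.2 = p := by
  refine ⟨fun p => if h : (p : ℕ) + 1 < N then
      ⟨(p, ⟨(p : ℕ) + 1, h⟩), by simp [Fin.lt_def]⟩
    else ⟨(⟨0, by omega⟩, p), by
      have := p.isLt; simp only [Fin.lt_def]; omega⟩, fun p => ?_⟩
  by_cases h : (p : ℕ) + 1 < N
  · left; simp [h]
  · right; simp [h]

/-- Any quadratic polynomial function over GF(2) in `n = 2·k·s`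
variables decomposes as a sum of `m = s·(2s − 1)` functions, each depending
only on a set of at most `2·k` coordinates. -/
theorem quadratic_decomposes_into_local_functions
    (k s n m : ℕ) (hk : 1 ≤ k) (hs : 1 ≤ s)
    (hn : n = 2 * k * s) (hm : m = s * (2 * s - 1))
    (a : Fin n → Fin n → ZMod 2) (b : Fin n → ZMod 2)
    (f : (Fin n → ZMod 2) → ZMod 2)
    (hf : ∀ x : Fin n → ZMod 2,
      f x = (∑ p ∈ Finset.univ.filter (fun p : Fin n × Fin n => p.1 < p.2),
              a p.1 p.2 * x p.1 * x p.2) + ∑ i : Fin n, b i * x i) :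
    ∃ (S : Fin m → Finset (Fin n))
      (g : Fin m → (Fin n → ZMod 2) → ZMod 2),
      (∀ t : Fin m, (S t).card ≤ 2 * k) ∧
      (∀ x : Fin n → ZMod 2, f x = ∑ t : Fin m, g t x) ∧
      (∀ t : Fin m, ∀ u v : Fin n → ZMod 2,
        (∀ i ∈ S t, u i = v i) → g t u = g t v) := by
  have hk0 : 0 < k := hk
  -- the block map
  have hblk : ∀ i : Fin n, (i : ℕ) / k < 2 * s := by
    intro i
    have hi : (i : ℕ) < 2 * k * s := by have := i.isLt; omega
    refine Nat.div_lt_of_lt_mul ?_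
    rw [show k * (2 * s) = 2 * k * s by ring]
    exact hi
  set blk : Fin n → Fin (2 * s) := fun i => ⟨(i : ℕ) / k, hblk i⟩ with hblkdef
  -- card of the half-blocks
  have hblkcard : ∀ p : Fin (2 * s),
      (Finset.univ.filter fun i : Fin n => blk i = p).card ≤ k := by
    intro p
    have := Finset.card_le_card_of_injOn (f := fun i : Fin n => (⟨(i : ℕ) % k, Nat.mod_lt _ hk0⟩ : Fin k))
      (fun i _ => Finset.mem_univ _) ?_ (s := Finset.univ.filter fun i : Fin n => blk i = p)
    · simpa using this
    · intro i hi j hj hij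
      simp only [Finset.mem_coe, Finset.mem_filter, hblkdef, Fin.mk.injEq] at hi hj hij
      have h1 := Nat.div_add_mod (i : ℕ) k
      have h2 := Nat.div_add_mod (j : ℕ) k
      have hiv : (i : ℕ) / k = (p : ℕ) := congrArg Fin.val hi.2
      have hjv : (j : ℕ) / k = (p : ℕ) := congrArg Fin.val hj.2
      exact Fin.ext (by rw [← h1, ← h2, hiv, hjv, hij])
  -- the pairing-up function for diagonal blocks
  obtain ⟨P, hP⟩ := aux_pairUp (2 * s) (by omega)
  -- the equivalence between ordered block pairs and Fin m
  have hcard : Fintype.card {pq : Fin (2 * s) × Fin (2 * s) // pq.1 < pq.2} = m := by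
    rw [Fintype.card_subtype]
    have h1 := aux_card_pairs (2 * s)
    have h2 : 2 * s * (2 * s - 1) = 2 * (s * (2 * s - 1)) := by rw [mul_assoc]
    omega
  set e := Fintype.equivFinOfCardEq hcard with he
  -- the assignment maps
  set asgn : Fin n × Fin n → Fin m := fun p =>
    if h : blk p.1 < blk p.2 then e ⟨(blk p.1, blk p.2), h⟩ else e (P (blk p.1)) with hasgn
  set asgnL : Fin n → Fin m := fun i => e (P (blk i)) with hasgnL
  refine ⟨fun t => Finset.univ.filter fun i : Fin n =>
      blk i = ((e.symm t) : _).1.1 ∨ blk i = ((e.symm t) : _).1.2,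
    fun t x =>
      (∑ p ∈ (Finset.univ.filter fun p : Fin n × Fin n => p.1 < p.2).filter
          (fun p => asgn p = t), a p.1 p.2 * x p.1 * x p.2) +
      ∑ i ∈ Finset.univ.filter (fun i : Fin n => asgnL i = t), b i * x i,
    ?_, ?_, ?_⟩
  · intro t
    simp only [Finset.filter_or]
    calc _ ≤ _ := Finset.card_union_le _ _
    _ ≤ k + k := Nat.add_le_add (hblkcard _) (hblkcard _)
    _ = 2 * k := by ring
  · intro x
    rw [hf x, Finset.sum_add_distrib]
    congr 1
    · rw [Finset.sum_fiberwise]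
    · rw [Finset.sum_fiberwise]
  · intro t u v huv
    have key : ∀ i : Fin n, (blk i = ((e.symm t) : _).1.1 ∨ blk i = ((e.symm t) : _).1.2)
        → u i = v i := by
      intro i hi
      exact huv i (Finset.mem_filter.2 ⟨Finset.mem_univ _, hi⟩)
    refine congrArg₂ (· + ·) (Finset.sum_congr rfl fun p hp => ?_) (Finset.sum_congr rfl fun i hi => ?_)
    · 
      simp only [Finset.mem_filter, Finset.mem_univ, true_and] at hp
      obtain ⟨hp1, hp2⟩ := hp
      by_cases h : blk p.1 < blk p.2
      · have hsymm : e.symm t = ⟨(blk p.1, blk p.2), h⟩ := by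
          rw [← hp2, hasgn]; simp [h]
        rw [key p.1 (by rw [hsymm]; left; rfl), key p.2 (by rw [hsymm]; right; rfl)]
      · -- blocks are equal since p.1 < p.2
        have hle : blk p.1 ≤ blk p.2 := by
          simp only [hblkdef, Fin.mk_le_mk]
          exact Nat.div_le_div_right (le_of_lt hp1)
        have heq : blk p.1 = blk p.2 := le_antisymm hle (not_lt.1 h)
        have hsymm : e.symm t = P (blk p.1) := by
          rw [← hp2, hasgn]; simp [h]
        have h1 : blk p.1 = (e.symm t : _).1.1 ∨ blk p.1 = (e.symm t : _).1.2 := by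
          rw [hsymm]
          rcases hP (blk p.1) with h' | h'
          · left; exact h'.symm
          · right; exact h'.symm
        rw [key p.1 h1, key p.2 (heq ▸ h1)]
    · simp only [Finset.mem_filter, Finset.mem_univ, true_and] at hi
      have hsymm : e.symm t = P (blk i) := by rw [← hi, hasgnL]; simp
      have h1 : blk i = (e.symm t : _).1.1 ∨ blk i = (e.symm t : _).1.2 := by
        rw [hsymm]
        rcases hP (blk i) with h' | h'
        · left; exact h'.symm
        · right; exact h'.symm
      rw [key i h1]
end

section
/- For every output string y : Fin (2^(l-1)) → ZMod 2, the map r ↦ q(r) is a bijection from the set of preimages {r : Fin (2^(l-h)) → Fin (2^h) | w_A r = y} onto the solution set of the following system in the 2^l unknowns q : Fin (2^(l-h)) → Fin (2^h) → ZMod 2: (linear equations, 2^(l-1) of them) for every t : Fin (2^(l-1)), ∑_{b} ∑_{j} A t b j * q b j = y t; (block-sum linear equations, 2^(l-h) of them) for every b, ∑_{j} q b j = 1; and (parity-restricted quadratic equations, 2^(l-1)·(2^(h-1) − 1) of them in total) for every b and every pair j ≠ j' in Fin (2^h) with j.val % 2 = j'.val % 2, q b j * q b j' = 0. Hence inverting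 the w function on y is equivalent to solving a system over GF(2) with 2^l unknowns, 2^(l-1) + 2^(l-h) linear equations, and 2^(l-1)·(2^(h-1) − 1) quadratic equations. -/
lemma zmod2_cases : ∀ x : ZMod 2, x = 0 ∨ x = 1 := by decide

/-- Inverting the `w` function on an output `y` is equivalent,
via the indicator encoding `q`, to solving a system over GF(2) with `2^l`
unknowns, `2^(l-1) + 2^(l-h)` linear equations, and
`2^(l-1) * (2^(h-1) - 1)` parity-restricted quadratic equations. -/
theorem w_inversion_equiv_system
    (h l : ℕ) (hh : 1 ≤ h) (hl : h < l)
    (A : Fin (2 ^ (l - 1)) → Fin (2 ^ (l - h)) → Fin (2 ^ h) → ZMod 2)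
    (y : Fin (2 ^ (l - 1)) → ZMod 2) :
    Set.BijOn
      (fun (r : Fin (2 ^ (l - h)) → Fin (2 ^ h)) =>
        fun (b : Fin (2 ^ (l - h))) (j : Fin (2 ^ h)) =>
          if j = r b then (1 : ZMod 2) else 0)
      {r : Fin (2 ^ (l - h)) → Fin (2 ^ h) |
        (fun t : Fin (2 ^ (l - 1)) =>
          ∑ b : Fin (2 ^ (l - h)), A t b (r b)) = y}
      {q : Fin (2 ^ (l - h)) → Fin (2 ^ h) → ZMod 2 |
        (∀ t : Fin (2 ^ (l - 1)),
          ∑ b : Fin (2 ^ (l - h)), ∑ j : Fin (2 ^ h), A t b j * q b j = y t) ∧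
        (∀ b : Fin (2 ^ (l - h)), ∑ j : Fin (2 ^ h), q b j = 1) ∧
        (∀ b : Fin (2 ^ (l - h)), ∀ j j' : Fin (2 ^ h),
          j ≠ j' → j.val % 2 = j'.val % 2 → q b j * q b j' = 0)} := by
  have key : ∀ b (r : Fin (2 ^ (l - h)) → Fin (2 ^ h)) t,
      ∑ j : Fin (2 ^ h), A t b j * (if j = r b then (1 : ZMod 2) else 0)
        = A t b (r b) := by
    intro b r t
    rw [Finset.sum_eq_single (r b)]
    · simp
    · intro j _ hj; simp [hj]
    · simp
  refine ⟨?_, ?_, ?_⟩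
  · -- MapsTo
    intro r hr
    refine ⟨?_, ?_, ?_⟩
    · intro t
      simp only [key]
      exact congrFun hr t
    · intro b; simp
    · intro b j j' hne _
      by_cases h1 : j = r b
      · have h2 : j' ≠ r b := by rw [← h1]; exact hne.symm
        simp [h2]
      · simp [h1]
  · -- InjOn
    intro r1 _ r2 _ heq
    funext b
    by_contra hne
    have := congrFun (congrFun heq b) (r1 b)
    simp only [if_pos rfl, if_neg hne] at this
    exact one_ne_zero this
  · -- SurjOn
    rintro q ⟨hlin, hsum, hquad⟩
    have hex : ∀ b, ∃ j0, Finset.univ.filter (fun j => q b j = 1) = {j0} := by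
      intro b
      set s := Finset.univ.filter (fun j => q b j = 1) with hs
      rw [← Finset.card_eq_one]
      have hcast : ((s.card : ℕ) : ZMod 2) = 1 := by
        have hb := hsum b
        have heq2 : ∑ j : Fin (2 ^ h), q b j
            = ∑ j : Fin (2 ^ h), (if q b j = 1 then (1 : ZMod 2) else 0) := by
          apply Finset.sum_congr rfl
          intro j _
          rcases zmod2_cases (q b j) with h0 | h1
          · simp [h0]
          · simp [h1]
        rw [heq2, Finset.sum_boole] at hb
        exact_mod_cast hb
      have hodd : s.card % 2 = 1 := by
        have hv : (s.card : ZMod 2).val = s.card % 2 := ZMod.val_natCast _ _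
        rw [hcast] at hv
        exact hv.symm.trans rfl
      have hpar : ∀ p, (s.filter (fun j => j.val % 2 = p)).card ≤ 1 := by
        intro p
        rw [Finset.card_le_one]
        intro a ha c hc
        simp only [Finset.mem_filter, hs, Finset.mem_univ, true_and] at ha hc
        by_contra hne
        have := hquad b a c hne (ha.2.trans hc.2.symm)
        rw [ha.1, hc.1] at this
        simp at this
      have hsplit : s.card ≤ 2 := by
        have hus : s = s.filter (fun j => j.val % 2 = 0) ∪ s.filter (fun j => j.val % 2 = 1) := by
          ext j
          simp only [Finset.mem_union, Finset.mem_filter]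
          constructor
          · intro hj
            rcases Nat.mod_two_eq_zero_or_one j.val with h0 | h1
            · exact Or.inl ⟨hj, h0⟩
            · exact Or.inr ⟨hj, h1⟩
          · rintro (⟨hj, _⟩ | ⟨hj, _⟩) <;> exact hj
        calc s.card = (s.filter (fun j => j.val % 2 = 0) ∪ s.filter (fun j => j.val % 2 = 1)).card := by
              rw [← hus]
          _ ≤ (s.filter (fun j => j.val % 2 = 0)).card
              + (s.filter (fun j => j.val % 2 = 1)).card := Finset.card_union_le _ _
          _ ≤ 2 := by have := hpar 0; have := hpar 1; omega
      omega
    choose r hr using hex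
    have hq : q = fun b j => if j = r b then (1 : ZMod 2) else 0 := by
      funext b j
      have hmem : j ∈ Finset.univ.filter (fun j => q b j = 1) ↔ j = r b := by
        rw [hr b]; simp
      simp only [Finset.mem_filter, Finset.mem_univ, true_and] at hmem
      by_cases hj : j = r b
      · rw [if_pos hj, hmem.mpr hj]
      · rw [if_neg hj]
        rcases zmod2_cases (q b j) with h0 | h1
        · exact h0
        · exact absurd (hmem.mp h1) hj
    refine ⟨r, ?_, hq.symm⟩
    funext t
    have := hlin t
    rw [hq] at this
    simp only [key] at this
    exact this
end
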